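/- arXiv:1109.6259 — 2 statements merged into one kernel-verified Lean document; each statement's English description precedes it below -/
import Mathlib

section
/- Let K ∈ 𝔹^{n_u×n_y} and G ∈ 𝔹^{n_y×n_u} be Boolean matrices, and define the sequence Z_0 = K, Z_{m+1} = Z_m + Z_m G Z_m (Boolean matrix operations). Then for all m ∈ ℕ, Z_m = Σ_{s=0}^{2^m − 1} K (G K)^s. -/
/-- Boolean (OR/AND semiring) matrix multiplication. -/
noncomputable def bmul {a b c : ℕ} (X : Matrix (Fin a) (Fin b) Bool) (Y : Matrix (Fin b) (Fin c) Bool) :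
    Matrix (Fin a) (Fin c) Bool :=
  fun i k => Finset.univ.sup fun j => X i j && Y j k

/-- Entrywise Boolean (OR) addition of matrices. -/
def badd {a b : ℕ} (X Y : Matrix (Fin a) (Fin b) Bool) : Matrix (Fin a) (Fin b) Bool :=
  fun i j => X i j || Y i j

/-- The sequence Z_0 = K, Z_{m+1} = Z_m + Z_m G Z_m. -/
noncomputable def Zseq {nu ny : ℕ} (K : Matrix (Fin nu) (Fin ny) Bool) (G : Matrix (Fin ny) (Fin nu) Bool) :
    ℕ → Matrix (Fin nu) (Fin ny) Bool
  | 0 => K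
  | m + 1 => badd (Zseq K G m) (bmul (bmul (Zseq K G m) G) (Zseq K G m))

/-- kterm K G s = K (G K)^s in the Boolean semiring. -/
noncomputable def kterm {nu ny : ℕ} (K : Matrix (Fin nu) (Fin ny) Bool) (G : Matrix (Fin ny) (Fin nu) Bool) :
    ℕ → Matrix (Fin nu) (Fin ny) Bool
  | 0 => K
  | s + 1 => bmul (kterm K G s) (bmul G K)

/-- Boolean (OR) sum of the matrices f 0, ..., f (N-1). -/
noncomputable def bsum {a b : ℕ} (N : ℕ) (f : ℕ → Matrix (Fin a) (Fin b) Bool) :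
    Matrix (Fin a) (Fin b) Bool :=
  fun i j => (Finset.range N).sup fun s => f s i j

/-- Number of nonzero (true) entries. -/
def ncount {a b : ℕ} (Z : Matrix (Fin a) (Fin b) Bool) : ℕ :=
  ∑ i : Fin a, ∑ j : Fin b, if Z i j then 1 else 0


lemma sup_bool_iff {α : Type*} (s : Finset α) (f : α → Bool) :
    s.sup f = true ↔ ∃ a ∈ s, f a = true := by
  induction s using Finset.cons_induction with
  | empty => simp
  | cons a s h ih => simp [Finset.sup_cons, ih]

lemma bmul_iff {a b c : ℕ} (X : Matrix (Fin a) (Fin b) Bool) (Y : Matrix (Fin b) (Fin c) Bool)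
    (i : Fin a) (k : Fin c) :
    bmul X Y i k = true ↔ ∃ j, X i j = true ∧ Y j k = true := by
  simp [bmul, sup_bool_iff]

lemma bsum_iff {a b : ℕ} (N : ℕ) (f : ℕ → Matrix (Fin a) (Fin b) Bool) (i : Fin a) (j : Fin b) :
    bsum N f i j = true ↔ ∃ s < N, f s i j = true := by
  simp [bsum, sup_bool_iff]

lemma kterm_add {nu ny : ℕ} (K : Matrix (Fin nu) (Fin ny) Bool)
    (G : Matrix (Fin ny) (Fin nu) Bool) (s t : ℕ) :
    kterm K G (s + t + 1) = bmul (kterm K G s) (bmul G (kterm K G t)) := by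
  induction t with
  | zero => rfl
  | succ t ih =>
    show kterm K G (s + t + 1 + 1) = _
    rw [show kterm K G (s + t + 1 + 1) = bmul (kterm K G (s + t + 1)) (bmul G K) from rfl, ih]
    funext i j
    apply Bool.eq_iff_iff.mpr
    constructor
    · intro h
      rw [bmul_iff] at h
      obtain ⟨p, hp, hGK⟩ := h
      rw [bmul_iff] at hp hGK
      obtain ⟨q, hq1, hq2⟩ := hp
      obtain ⟨r, hr1, hr2⟩ := hGK
      rw [bmul_iff] at hq2
      obtain ⟨w, hw1, hw2⟩ := hq2
      rw [bmul_iff]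
      refine ⟨q, hq1, ?_⟩
      rw [bmul_iff]
      refine ⟨w, hw1, ?_⟩
      show kterm K G (t + 1) w j = true
      rw [show kterm K G (t + 1) = bmul (kterm K G t) (bmul G K) from rfl, bmul_iff]
      refine ⟨p, hw2, ?_⟩
      rw [bmul_iff]
      exact ⟨r, hr1, hr2⟩
    · intro h
      rw [bmul_iff] at h
      obtain ⟨q, hq1, hq2⟩ := h
      rw [bmul_iff] at hq2
      obtain ⟨w, hw1, hw2⟩ := hq2
      rw [show kterm K G (t + 1) = bmul (kterm K G t) (bmul G K) from rfl, bmul_iff] at hw2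
      obtain ⟨p, hp1, hp2⟩ := hw2
      rw [bmul_iff] at hp2
      obtain ⟨r, hr1, hr2⟩ := hp2
      rw [bmul_iff]
      refine ⟨p, ?_, ?_⟩
      · rw [bmul_iff]
        refine ⟨q, hq1, ?_⟩
        rw [bmul_iff]
        exact ⟨w, hw1, hp1⟩
      · rw [bmul_iff]
        exact ⟨r, hr1, hr2⟩

theorem stmt3 {nu ny : ℕ} (K : Matrix (Fin nu) (Fin ny) Bool)
    (G : Matrix (Fin ny) (Fin nu) Bool) :
    ∀ m : ℕ, Zseq K G m = bsum (2 ^ m) (kterm K G) := by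
  intro m
  induction m with
  | zero =>
    funext i j
    simp [Zseq, bsum, Finset.range_one]
    rfl
  | succ m ih =>
    funext i j
    show badd (Zseq K G m) (bmul (bmul (Zseq K G m) G) (Zseq K G m)) i j = _
    rw [ih]
    apply Bool.eq_iff_iff.mpr
    rw [bsum_iff]
    constructor
    · intro h
      rcases Bool.or_eq_true_iff.mp h with h | h
      · rw [bsum_iff] at h
        obtain ⟨s, hs, h⟩ := h
        exact ⟨s, lt_of_lt_of_le hs (Nat.pow_le_pow_right (by norm_num) (Nat.le_succ m)), h⟩
      · rw [bmul_iff] at h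
        obtain ⟨p, hp, hZ2⟩ := h
        rw [bmul_iff] at hp
        obtain ⟨q, hZ1, hG⟩ := hp
        rw [bsum_iff] at hZ1 hZ2
        obtain ⟨s, hs, h1⟩ := hZ1
        obtain ⟨t, ht, h2⟩ := hZ2
        refine ⟨s + t + 1, ?_, ?_⟩
        · have : (2:ℕ)^(m+1) = 2^m + 2^m := by ring
          omega
        · rw [kterm_add, bmul_iff]
          refine ⟨q, h1, ?_⟩
          rw [bmul_iff]
          exact ⟨p, hG, h2⟩
    · rintro ⟨u, hu, h⟩
      show (bsum (2^m) (kterm K G) i j || _) = true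
      rw [Bool.or_eq_true_iff]
      by_cases hcase : u < 2 ^ m
      · left
        rw [bsum_iff]
        exact ⟨u, hcase, h⟩
      · right
        have h2m : 1 ≤ 2 ^ m := Nat.one_le_two_pow
        have hpow : (2:ℕ)^(m+1) = 2^m + 2^m := by ring
        have hu' : u = (2^m - 1) + (u - 2^m) + 1 := by omega
        rw [hu', kterm_add, bmul_iff] at h
        obtain ⟨q, h1, h2⟩ := h
        rw [bmul_iff] at h2
        obtain ⟨p, hG, h2⟩ := h2
        rw [bmul_iff]
        refine ⟨p, ?_, ?_⟩
        · rw [bmul_iff]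
          refine ⟨q, ?_, hG⟩
          rw [bsum_iff]
          exact ⟨2^m - 1, by omega, h1⟩
        · rw [bsum_iff]
          exact ⟨u - 2^m, by omega, h2⟩
end

section
/- Let K ∈ 𝔹^{n_u×n_y}, G ∈ 𝔹^{n_y×n_u} be Boolean matrices and n = min(n_y, n_u). Then for every r ∈ ℕ, K(GK)^r ≤ Σ_{s=0}^{n−1} K(GK)^s entrywise. -/
lemma bsup_eq_true_iff {α : Type*} [Fintype α] (f : α → Bool) :
    Finset.univ.sup f = true ↔ ∃ x, f x = true := by
  constructor
  · intro h
    by_contra hc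
    push_neg at hc
    have h2 : Finset.univ.sup f = ⊥ := (Finset.sup_eq_bot_iff _ _).mpr (fun x _ => by
      simpa using hc x)
    rw [h2] at h
    exact absurd h (by simp [Bot.bot])
  · rintro ⟨x, hx⟩
    have := Finset.le_sup (f := f) (Finset.mem_univ x)
    rw [hx] at this
    exact le_antisymm (show Finset.univ.sup f ≤ true by simp) this

lemma rsup_true {N : ℕ} (f : ℕ → Bool) (s : ℕ) (hs : s < N) (h : f s = true) :
    (Finset.range N).sup f = true := by
  have := Finset.le_sup (f := f) (Finset.mem_range.mpr hs)
  rw [h] at this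
  exact le_antisymm (by simp) this

section Paths

variable {nu ny : ℕ} (K : Matrix (Fin nu) (Fin ny) Bool) (G : Matrix (Fin ny) (Fin nu) Bool)

def IsPath (r : ℕ) (i : Fin nu) (j : Fin ny) (u : ℕ → Fin nu) (y : ℕ → Fin ny) : Prop :=
  u 0 = i ∧ y r = j ∧ (∀ t ≤ r, K (u t) (y t) = true) ∧ (∀ t < r, G (y t) (u (t+1)) = true)

lemma kterm_iff (r : ℕ) (i : Fin nu) (j : Fin ny) :
    kterm K G r i j = true ↔ ∃ u y, IsPath K G r i j u y := by
  induction r generalizing j with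
  | zero =>
    constructor
    · intro h
      exact ⟨fun _ => i, fun _ => j, rfl, rfl, fun t _ => h, fun t ht => absurd ht (by omega)⟩
    · rintro ⟨u, y, hu, hy, hK, _⟩
      have := hK 0 le_rfl
      rwa [hu, hy] at this
  | succ r ih =>
    constructor
    · intro h
      rw [show kterm K G (r+1) i j = Finset.univ.sup
            (fun j' => kterm K G r i j' && Finset.univ.sup (fun u' => G j' u' && K u' j)) from rfl,
        bsup_eq_true_iff] at h
      obtain ⟨j', hj'⟩ := h
      rw [Bool.and_eq_true, bsup_eq_true_iff] at hj'
      obtain ⟨hk, u', hu'⟩ := hj'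
      rw [Bool.and_eq_true] at hu'
      obtain ⟨hG, hK'⟩ := hu'
      obtain ⟨u, y, hu0, hyr, hK, hGp⟩ := (ih j').mp hk
      refine ⟨fun t => if t ≤ r then u t else u', fun t => if t ≤ r then y t else j, ?_, ?_, ?_, ?_⟩
      · simp [hu0]
      · simp
      · intro t ht
        rcases Nat.lt_or_ge t (r+1) with h1 | h1
        · have h2 : t ≤ r := by omega
          simp [h2, hK t h2]
        · have h2 : ¬ t ≤ r := by omega
          have h3 : t = r + 1 := by omega
          simp [h2, hK']
      · intro t ht
        rcases Nat.lt_or_ge t r with h1 | h1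
        · have h2 : t ≤ r := by omega
          have h3 : t + 1 ≤ r := by omega
          simp [h2, h3, hGp t h1]
        · have h3 : t = r := by omega
          subst h3
          have h2 : ¬ (t + 1 ≤ t) := by omega
          simp [h2, hyr, hG]
    · rintro ⟨u, y, hu0, hyr, hK, hGp⟩
      rw [show kterm K G (r+1) i j = Finset.univ.sup
            (fun j' => kterm K G r i j' && Finset.univ.sup (fun u' => G j' u' && K u' j)) from rfl,
        bsup_eq_true_iff]
      refine ⟨y r, ?_⟩
      rw [Bool.and_eq_true]
      constructor
      · exact (ih (y r)).mpr ⟨u, y, hu0, rfl, fun t ht => hK t (by omega), fun t ht => hGp t (by omega)⟩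
      · rw [bsup_eq_true_iff]
        refine ⟨u (r+1), ?_⟩
        rw [Bool.and_eq_true]
        exact ⟨hGp r (by omega), by rw [← hyr]; exact hK (r+1) le_rfl⟩

lemma splice_u {r : ℕ} {i : Fin nu} {j : Fin ny} {u : ℕ → Fin nu} {y : ℕ → Fin ny}
    (hp : IsPath K G r i j u y) {a b : ℕ} (hab : a < b) (hbr : b ≤ r) (hu : u a = u b) :
    ∃ u' y', IsPath K G (r - (b - a)) i j u' y' := by
  obtain ⟨hu0, hyr, hK, hGp⟩ := hp
  set d := b - a with hd
  refine ⟨fun t => if t < a then u t else u (t + d), fun t => if t < a then y t else y (t + d),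
    ?_, ?_, ?_, ?_⟩
  · show (if 0 < a then u 0 else u (0 + d)) = i
    rcases Nat.eq_zero_or_pos a with h | h
    · subst h
      rw [if_neg (by omega), show 0 + d = b by omega, ← hu, hu0]
    · rw [if_pos h, hu0]
  · have h1 : ¬ (r - d < a) := by omega
    have h2 : r - d + d = r := by omega
    simp [h1, h2, hyr]
  · intro t ht
    by_cases h1 : t < a
    · simp [h1, hK t (by omega)]
    · simp only [if_neg h1]
      exact hK (t + d) (by omega)
  · intro t ht
    by_cases h1 : t + 1 < a
    · have h2 : t < a := by omega
      simp [h1, h2, hGp t (by omega)]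
    · by_cases h2 : t < a
      · -- t = a - 1
        have h3 : t + 1 = a := by omega
        simp only [if_pos h2, if_neg (by omega : ¬ t + 1 < a)]
        have h4 : t + 1 + d = b := by omega
        rw [h4, ← hu, ← h3]
        exact hGp t (by omega)
      · simp only [if_neg h1, if_neg h2]
        have : t + 1 + d = t + d + 1 := by omega
        rw [this]
        exact hGp (t + d) (by omega)

lemma splice_y {r : ℕ} {i : Fin nu} {j : Fin ny} {u : ℕ → Fin nu} {y : ℕ → Fin ny}
    (hp : IsPath K G r i j u y) {a b : ℕ} (hab : a < b) (hbr : b ≤ r) (hy : y a = y b) :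
    ∃ u' y', IsPath K G (r - (b - a)) i j u' y' := by
  obtain ⟨hu0, hyr, hK, hGp⟩ := hp
  set d := b - a with hd
  refine ⟨fun t => if t ≤ a then u t else u (t + d), fun t => if t < a then y t else y (t + d),
    ?_, ?_, ?_, ?_⟩
  · simp [Nat.zero_le, hu0]
  · have h1 : ¬ (r - d < a) := by omega
    have h2 : r - d + d = r := by omega
    simp [h1, h2, hyr]
  · intro t ht
    by_cases h1 : t < a
    · simp [h1, Nat.le_of_lt h1, hK t (by omega)]
    · by_cases h2 : t ≤ a
      · -- t = a
        have h3 : t = a := by omega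
        simp only [if_pos h2, if_neg h1]
        have h4 : t + d = b := by omega
        rw [h4, ← hy, h3]
        exact hK a (by omega)
      · simp only [if_neg h1, if_neg h2]
        exact hK (t + d) (by omega)
  · intro t ht
    by_cases h1 : t < a
    · simp [h1, (by omega : t + 1 ≤ a), hGp t (by omega)]
    · simp only [if_neg h1, if_neg (by omega : ¬ t + 1 ≤ a)]
      have : t + 1 + d = t + d + 1 := by omega
      rw [this]
      exact hGp (t + d) (by omega)

lemma descent {r : ℕ} (i : Fin nu) (j : Fin ny) (hr : min ny nu ≤ r)
    (h : kterm K G r i j = true) : ∃ s < r, kterm K G s i j = true := by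
  obtain ⟨u, y, hp⟩ := (kterm_iff K G r i j).mp h
  have key : ∃ a b, a < b ∧ b ≤ r ∧ (u a = u b ∨ y a = y b) := by
    rcases Nat.le_total ny nu with hle | hle
    · -- min = ny, pigeonhole on y
      have hcard : Fintype.card (Fin ny) < Fintype.card (Fin (r+1)) := by
        simp; omega
      obtain ⟨x, x', hne, heq⟩ := Fintype.exists_ne_map_eq_of_card_lt
        (fun t : Fin (r+1) => y t.val) hcard
      rcases Nat.lt_or_ge x.val x'.val with hlt | hge
      · exact ⟨x.val, x'.val, hlt, by omega, Or.inr heq⟩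
      · have : x'.val < x.val := by
          rcases Nat.lt_or_ge x'.val x.val with h' | h'
          · exact h'
          · exact absurd (Fin.ext (by omega)) hne
        exact ⟨x'.val, x.val, this, by omega, Or.inr heq.symm⟩
    · -- min = nu, pigeonhole on u
      have hcard : Fintype.card (Fin nu) < Fintype.card (Fin (r+1)) := by
        simp; omega
      obtain ⟨x, x', hne, heq⟩ := Fintype.exists_ne_map_eq_of_card_lt
        (fun t : Fin (r+1) => u t.val) hcard
      rcases Nat.lt_or_ge x.val x'.val with hlt | hge
      · exact ⟨x.val, x'.val, hlt, by omega, Or.inl heq⟩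
      · have : x'.val < x.val := by
          rcases Nat.lt_or_ge x'.val x.val with h' | h'
          · exact h'
          · exact absurd (Fin.ext (by omega)) hne
        exact ⟨x'.val, x.val, this, by omega, Or.inl heq.symm⟩
  obtain ⟨a, b, hab, hbr, hcase⟩ := key
  refine ⟨r - (b - a), by omega, ?_⟩
  rw [kterm_iff]
  rcases hcase with hc | hc
  · exact splice_u K G hp hab hbr hc
  · exact splice_y K G hp hab hbr hc

end Paths

theorem stmt4 {nu ny : ℕ} (K : Matrix (Fin nu) (Fin ny) Bool)
    (G : Matrix (Fin ny) (Fin nu) Bool) :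
    ∀ (r : ℕ) (i : Fin nu) (j : Fin ny),
      kterm K G r i j ≤ bsum (min ny nu) (kterm K G) i j := by
  intro r
  induction r using Nat.strong_induction_on with
  | _ r ih =>
    intro i j
    rcases Bool.eq_false_or_eq_true (kterm K G r i j) with h | h
    case inr => simp [h]
    · rw [h]
      rcases Nat.lt_or_ge r (min ny nu) with hr | hr
      · have := rsup_true (fun s => kterm K G s i j) r hr h
        rw [show bsum (min ny nu) (kterm K G) i j = (Finset.range (min ny nu)).sup
              (fun s => kterm K G s i j) from rfl, this]
      · obtain ⟨s, hs, hks⟩ := descent K G i j hr h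
        have := ih s hs i j
        rw [hks] at this
        exact this
end
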